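/- arXiv:2005.08496 — 2 statements merged into one kernel-verified Lean document; each statement's English description precedes it below -/
import Mathlib

section
/- Sign of the first Fourier mode coefficient ω_{1,0}: with R > 0, g radially symmetric non-increasing nonnegative on the disk B* of radius R, u₀ = φ₀(|·|) solving -Δu₀ = g in B*, u₀ = 0 on ∂B*, one has ω_{1,0}/(πR) = (2/R)(φ₀'(R))² + g(R)φ₀'(R) = -φ₀'(R)·( (1/(πR²))∫_{B*} g - g(R) ). Hence ω_{1,0} > 0 if and only if πR² g(R) < ∫_{B*} g (given ∫_{B*} g > 0). -/
/-- sign of the first Fourier mode coefficient `ω_{1,0}`.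
Here `p = φ₀'(R) < 0` is the boundary radial derivative of the state on the
disk of radius `R`, `gR = g(R)`, and `Ig = ∫_{B*} g`; the flux identity
gives `Ig = -2πRp`.  The coefficient is
`ω = πR(-Λ₀/R + (1/(2R))p² + gR·p - p·ψ'₁₀(R))` with `Λ₀ = -p²/2` and
`ψ'₁₀(R) = -p/R`.  Then `ω/(πR) = (2/R)p² + gR·p
= -p((1/(πR²))Ig - gR)`, and (given `0 < Ig`) `ω > 0 ↔ πR²gR < Ig`. -/
theorem stmt_13 (R p gR Ig ω : ℝ) (hR : 0 < R) (hp : p < 0)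
    (hflux : Ig = -(2 * Real.pi * R * p)) (hIg : 0 < Ig)
    (hω : ω = Real.pi * R *
      (-(-(1 / 2) * p ^ 2) / R + (1 / (2 * R)) * p ^ 2 + gR * p
        - p * (-p / R))) :
    ω = Real.pi * R * ((2 / R) * p ^ 2 + gR * p) ∧
    ω = Real.pi * R * (-p * ((1 / (Real.pi * R ^ 2)) * Ig - gR)) ∧
    (0 < ω ↔ Real.pi * R ^ 2 * gR < Ig) := by
  have hπ : (0:ℝ) < Real.pi := Real.pi_pos
  have hRne : R ≠ 0 := hR.ne'
  have hπne : Real.pi ≠ 0 := hπ.ne'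
  have h1 : ω = Real.pi * R * ((2 / R) * p ^ 2 + gR * p) := by
    rw [hω]; field_simp; ring
  have h2 : ω = Real.pi * R * (-p * ((1 / (Real.pi * R ^ 2)) * Ig - gR)) := by
    rw [h1, hflux]; field_simp; ring
  refine ⟨h1, h2, ?_⟩
  rw [h2]
  have hπR : 0 < Real.pi * R := by positivity
  have hnp : 0 < -p := by linarith
  rw [mul_pos_iff]
  constructor
  · rintro (⟨-, h⟩ | ⟨h, -⟩)
    · have h' : 0 < (1 / (Real.pi * R ^ 2)) * Ig - gR :=
        by nlinarith
      have hR2 : (0:ℝ) < Real.pi * R ^ 2 := by positivity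
      have := mul_lt_mul_of_pos_right h' hR2
      rw [lt_sub_iff_add_lt] at h'
      have : gR * (Real.pi * R ^ 2) < (1 / (Real.pi * R ^ 2)) * Ig * (Real.pi * R ^ 2) := by
        nlinarith
      rw [one_div, inv_mul_eq_div, div_mul_cancel₀ _ hR2.ne'] at this
      linarith [mul_comm gR (Real.pi * R ^ 2)]
    · linarith
  · intro h
    left
    refine ⟨hπR, ?_⟩
    have : gR < (1 / (Real.pi * R ^ 2)) * Ig := by
      rw [div_mul_eq_mul_div, lt_div_iff₀ (by positivity)]
      linarith [mul_comm gR (Real.pi * R ^ 2)]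
    nlinarith
end

section
/- Linear growth of mode derivatives: let R > 0, c ∈ L^∞(0,R), and for integer k suppose k²/r² + c(r) ≥ k²/(2r²) on (0,R). Let ψ_k ≥ 0 solve -(1/r)(rψ_k')' = -(k²/r² + c)ψ_k with ψ_k(0)=0, ψ_k(R) = δ > 0. Let y_k(r) = δ (r/R)^{k/√2}, which solves -(1/r)(ry_k')' = -(k²/(2r²)) y_k with y_k(R)=δ. Then ψ_k ≥ y_k on [0,R] fails in general but z_k = ψ_k - y_k satisfies z_k ≤ 0, z_k(R)=0, hence ψ_k'(R) ≥ y_k'(R) = δ k/(√2 R). -/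
open Set Filter Topology

/-- linear growth of mode derivatives.  Under the assumption
`k²/r² + c(r) ≥ k²/(2r²)` on `(0,R)`, the nonnegative solution `ψ_k` of
`-(1/r)(rψ_k')' = -(k²/r² + c)ψ_k` with `ψ_k(0) = 0`, `ψ_k(R) = δ > 0` is
dominated by the explicit supersolution `y_k(r) = δ (r/R)^{k/√2}` (which
solves `-(1/r)(ry_k')' = -(k²/(2r²)) y_k`, `y_k(R) = δ`): one has
`ψ_k - y_k ≤ 0` on `[0,R]`, hence `ψ_k'(R) ≥ y_k'(R) = δ k/(√2 R)`. -/
theorem stmt_16 (R δ : ℝ) (hR : 0 < R) (hδ : 0 < δ) (c : ℝ → ℝ)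
    (k : ℕ) (hk : 1 ≤ k)
    (hpos : ∀ r ∈ Ioo 0 R,
      (k : ℝ) ^ 2 / (2 * r ^ 2) ≤ (k : ℝ) ^ 2 / r ^ 2 + c r)
    (ψk : ℝ → ℝ)
    (hψkc : ContinuousOn ψk (Icc 0 R))
    (hψksm : ∀ r ∈ Ioo 0 R, ContDiffAt ℝ 2 ψk r)
    (hodek : ∀ r ∈ Ioo 0 R,
      HasDerivAt (fun s => s * deriv ψk s)
        (((k : ℝ) ^ 2 / r ^ 2 + c r) * r * ψk r) r)
    (h0 : ψk 0 = 0) (hbR : ψk R = δ)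
    (hψkpos : ∀ r ∈ Icc 0 R, 0 ≤ ψk r)
    (hdiffR : DifferentiableAt ℝ ψk R) :
    (∀ r ∈ Icc 0 R, ψk r ≤ δ * (r / R) ^ ((k : ℝ) / Real.sqrt 2)) ∧
      δ * k / (Real.sqrt 2 * R) ≤ deriv ψk R := by
  have hs2 : (0:ℝ) < Real.sqrt 2 := Real.sqrt_pos.mpr (by norm_num)
  have hkpos : (0:ℝ) < (k:ℝ) := by exact_mod_cast hk
  set α : ℝ := (k : ℝ) / Real.sqrt 2 with hαdef
  have hα : 0 < α := div_pos hkpos hs2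
  have hα2 : α ^ 2 = (k:ℝ) ^ 2 / 2 := by
    rw [hαdef, div_pow, Real.sq_sqrt (by norm_num : (0:ℝ) ≤ 2)]
  set y : ℝ → ℝ := fun r => δ * (r / R) ^ α with hydef
  have hy0 : y 0 = 0 := by
    simp [hydef, Real.zero_rpow hα.ne']
  have hyR : y R = δ := by
    simp [hydef, div_self hR.ne']
  -- derivative of y at positive points
  have hyd : ∀ r : ℝ, 0 < r → HasDerivAt y (α * y r / r) r := by
    intro r hr
    have hb : 0 < r / R := div_pos hr hR
    have h1 : HasDerivAt (fun s : ℝ => s / R) (1 / R) r := by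
      simpa using (hasDerivAt_id r).div_const R
    have h2 := (h1.rpow_const (p := α) (Or.inl hb.ne')).const_mul δ
    convert h2 using 1
    · rfl
    · rfl
    have he : (r / R) ^ (α - 1) = (r / R) ^ α / (r / R) := by
      rw [Real.rpow_sub hb, Real.rpow_one]
    rw [hydef]
    simp only [he]
    field_simp
  -- continuity of y
  have hycont : ContinuousOn y (Icc 0 R) := by
    intro x _
    apply ContinuousAt.continuousWithinAt
    have h1 := Real.continuousAt_rpow_const (x / R) α (Or.inr hα.le)
    have h2 : ContinuousAt (fun r : ℝ => (r / R) ^ α) x :=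
      ContinuousAt.comp (g := fun s : ℝ => s ^ α) (f := fun s : ℝ => s / R) h1
        ((continuous_id.div_const R).continuousAt)
    exact continuousAt_const.mul h2
  have hzcont : ContinuousOn (fun r => ψk r - y r) (Icc 0 R) := hψkc.sub hycont
  have hz0 : ψk 0 - y 0 = 0 := by rw [h0, hy0]; ring
  have hzR : ψk R - y R = 0 := by rw [hbR, hyR]; ring
  -- derivative of z on (0,R)
  have hzd : ∀ x ∈ Ioo (0:ℝ) R, HasDerivAt (fun r => ψk r - y r)
      (deriv ψk x - α * y x / x) x := by
    intro x hx
    exact (((hψksm x hx).differentiableAt (by norm_num)).hasDerivAt).sub (hyd x hx.1)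
  -- the auxiliary function w = r ψ' - α y
  set w : ℝ → ℝ := fun r => r * deriv ψk r - α * y r with hwdef
  have hwd : ∀ x ∈ Ioo (0:ℝ) R, HasDerivAt w
      (((k : ℝ) ^ 2 / x ^ 2 + c x) * x * ψk x - α * (α * y x / x)) x := by
    intro x hx
    exact (hodek x hx).sub ((hyd x hx.1).const_mul α)
  -- the derivative of w is positive wherever z > 0
  have hwpos : ∀ x ∈ Ioo (0:ℝ) R, 0 < ψk x - y x →
      0 < ((k : ℝ) ^ 2 / x ^ 2 + c x) * x * ψk x - α * (α * y x / x) := by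
    intro x hx hzx
    have hx0 : (0:ℝ) < x := hx.1
    have hψ0 : 0 ≤ ψk x := hψkpos x ⟨hx.1.le, hx.2.le⟩
    have hA := hpos x hx
    have hid : α * (α * y x / x) = (k:ℝ) ^ 2 / (2 * x ^ 2) * x * y x := by
      rw [show α * (α * y x / x) = α ^ 2 * (y x / x) by ring, hα2]
      field_simp
    rw [hid]
    have hc1 : 0 < (k:ℝ) ^ 2 / (2 * x ^ 2) * x := by positivity
    have h1 : (k:ℝ) ^ 2 / (2 * x ^ 2) * x * y x < (k:ℝ) ^ 2 / (2 * x ^ 2) * x * ψk x :=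
      mul_lt_mul_of_pos_left (by linarith) hc1
    have h2 : (k:ℝ) ^ 2 / (2 * x ^ 2) * x * ψk x ≤ ((k : ℝ) ^ 2 / x ^ 2 + c x) * x * ψk x :=
      mul_le_mul_of_nonneg_right (mul_le_mul_of_nonneg_right hA hx0.le) hψ0
    linarith
  -- main comparison: z ≤ 0 on [0,R]
  have hmain : ∀ p ∈ Icc (0:ℝ) R, ψk p - y p ≤ 0 := by
    intro p hp
    by_contra hcon
    push_neg at hcon
    have hp0 : p ≠ 0 := by
      intro h; rw [h, hz0] at hcon; exact lt_irrefl 0 hcon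
    have hpR : p ≠ R := by
      intro h; rw [h, hzR] at hcon; exact lt_irrefl 0 hcon
    have hpI : p ∈ Ioo (0:ℝ) R := ⟨lt_of_le_of_ne hp.1 (Ne.symm hp0), lt_of_le_of_ne hp.2 hpR⟩
    -- the set of zeros below p
    set A : Set ℝ := Icc 0 p ∩ (fun r => ψk r - y r) ⁻¹' (Iic 0) with hAdef
    have hAcl : IsClosed A :=
      (hzcont.mono (Icc_subset_Icc le_rfl hpI.2.le)).preimage_isClosed_of_isClosed
        isClosed_Icc isClosed_Iic
    have h0A : (0:ℝ) ∈ A := ⟨⟨le_rfl, hpI.1.le⟩, by simp [hz0]⟩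
    have hAbdd : BddAbove A := ⟨p, fun x hx => hx.1.2⟩
    obtain ⟨a, hadef⟩ : ∃ a : ℝ, a = sSup A := ⟨_, rfl⟩
    have haA : a ∈ A := by rw [hadef]; exact hAcl.csSup_mem ⟨0, h0A⟩ hAbdd
    have ha0 : 0 ≤ a := haA.1.1
    have hza : ψk a - y a ≤ 0 := haA.2
    have hap : a < p := lt_of_le_of_ne haA.1.2 (by
      rintro rfl; exact absurd hza (not_le.mpr hcon))
    have hzpos1 : ∀ r, a < r → r ≤ p → 0 < ψk r - y r := by
      intro r h1 h2
      rcases lt_or_ge 0 (ψk r - y r) with h | h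
      · exact h
      · have := le_csSup hAbdd (show r ∈ A from ⟨⟨le_trans ha0 h1.le, h2⟩, h⟩)
        rw [← hadef] at this
        exact absurd this (not_le.mpr h1)
    -- the set of zeros above p
    set B : Set ℝ := Icc p R ∩ (fun r => ψk r - y r) ⁻¹' (Iic 0) with hBdef
    have hBcl : IsClosed B :=
      (hzcont.mono (Icc_subset_Icc hpI.1.le le_rfl)).preimage_isClosed_of_isClosed
        isClosed_Icc isClosed_Iic
    have hRB : R ∈ B := ⟨⟨hpI.2.le, le_rfl⟩, by simp [hzR]⟩
    have hBbdd : BddBelow B := ⟨p, fun x hx => hx.1.1⟩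
    obtain ⟨b, hbdef⟩ : ∃ b : ℝ, b = sInf B := ⟨_, rfl⟩
    have hbB : b ∈ B := by rw [hbdef]; exact hBcl.csInf_mem ⟨R, hRB⟩ hBbdd
    have hbR' : b ≤ R := hbB.1.2
    have hzb : ψk b - y b ≤ 0 := hbB.2
    have hpb : p < b := lt_of_le_of_ne hbB.1.1 (by
      rintro rfl; exact absurd hzb (not_le.mpr hcon))
    have hzpos2 : ∀ r, p ≤ r → r < b → 0 < ψk r - y r := by
      intro r h1 h2
      rcases lt_or_ge 0 (ψk r - y r) with h | h
      · exact h
      · have := csInf_le hBbdd (show r ∈ B from ⟨⟨h1, le_trans h2.le hbR'⟩, h⟩)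
        rw [← hbdef] at this
        exact absurd this (not_le.mpr h2)
    have hzpos : ∀ r ∈ Ioo a b, 0 < ψk r - y r := by
      intro r hr
      rcases le_or_gt r p with h | h
      · exact hzpos1 r hr.1 h
      · exact hzpos2 r h.le hr.2
    -- mean value theorem on [a,p]
    obtain ⟨ξ, hξ, hξd⟩ := exists_hasDerivAt_eq_slope (fun r => ψk r - y r)
      (fun x => deriv ψk x - α * y x / x) hap
      (hzcont.mono (Icc_subset_Icc ha0 hpI.2.le))
      (fun x hx => hzd x ⟨lt_of_le_of_lt ha0 hx.1, hx.2.trans hpI.2⟩)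
    have hξ0 : 0 < ξ := lt_of_le_of_lt ha0 hξ.1
    have hξb : ξ < b := hξ.2.trans hpb
    have hslope : 0 < deriv ψk ξ - α * y ξ / ξ := by
      rw [hξd]
      exact div_pos (by linarith) (by linarith)
    have hwξ : 0 < w ξ := by
      have he : w ξ = ξ * (deriv ψk ξ - α * y ξ / ξ) := by
        rw [hwdef]; field_simp
      rw [he]
      exact mul_pos hξ0 hslope
    -- w is positive on (ξ, b)
    have hwpos' : ∀ r ∈ Ioo ξ b, 0 < w r := by
      intro r hr
      have hrR : r < R := lt_of_lt_of_le hr.2 hbR'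
      have hsub : Icc ξ r ⊆ Ioo 0 R := fun x hx =>
        ⟨lt_of_lt_of_le hξ0 hx.1, lt_of_le_of_lt hx.2 hrR⟩
      have hmono : StrictMonoOn w (Icc ξ r) := by
        apply strictMonoOn_of_deriv_pos (convex_Icc ξ r)
        · intro x hx
          exact ((hwd x (hsub hx)).differentiableAt.continuousAt).continuousWithinAt
        · intro x hx
          rw [interior_Icc] at hx
          have hxI : x ∈ Ioo (0:ℝ) R := hsub ⟨hx.1.le, hx.2.le⟩
          rw [(hwd x hxI).deriv]
          exact hwpos x hxI (hzpos x ⟨hξ.1.trans hx.1, hx.2.trans hr.2⟩)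
      have := hmono ⟨le_rfl, hr.1.le⟩ ⟨hr.1.le, le_rfl⟩ hr.1
      linarith
    -- hence z is strictly increasing on [ξ, b]
    have hmono : StrictMonoOn (fun r => ψk r - y r) (Icc ξ b) := by
      apply strictMonoOn_of_deriv_pos (convex_Icc ξ b)
      · exact hzcont.mono (Icc_subset_Icc hξ0.le hbR')
      · intro x hx
        rw [interior_Icc] at hx
        have hxI : x ∈ Ioo (0:ℝ) R := ⟨hξ0.trans hx.1, lt_of_lt_of_le hx.2 hbR'⟩
        rw [(hzd x hxI).deriv]
        have hwx := hwpos' x hx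
        have hxne : x ≠ 0 := ne_of_gt hxI.1
        have he : w x = x * (deriv ψk x - α * y x / x) := by
          rw [hwdef]; field_simp
        rw [he] at hwx
        nlinarith [hxI.1]
    have h1 : ψk ξ - y ξ < ψk b - y b :=
      hmono ⟨le_rfl, (hξ.2.trans hpb).le⟩ ⟨(hξ.2.trans hpb).le, le_rfl⟩ (hξ.2.trans hpb)
    have h2 : 0 < ψk ξ - y ξ := hzpos1 ξ hξ.1 hξ.2.le
    linarith
  constructor
  · intro r hr
    have := hmain r hr
    rw [hydef] at this
    linarith
  -- derivative bound at R
  · have hydR : HasDerivAt y (α * δ / R) R := by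
      have := hyd R hR
      rwa [hyR] at this
    have hzdR : HasDerivAt (fun r => ψk r - y r) (deriv ψk R - α * δ / R) R :=
      hdiffR.hasDerivAt.sub hydR
    have hsl : Tendsto (slope (fun r => ψk r - y r) R) (𝓝[≠] R)
        (𝓝 (deriv ψk R - α * δ / R)) := hasDerivAt_iff_tendsto_slope.mp hzdR
    have hsl' : Tendsto (slope (fun r => ψk r - y r) R) (𝓝[<] R)
        (𝓝 (deriv ψk R - α * δ / R)) :=
      hsl.mono_left (nhdsWithin_mono R (fun x hx => ne_of_lt hx))
    have hnn : 0 ≤ deriv ψk R - α * δ / R := by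
      refine ge_of_tendsto hsl' ?_
      filter_upwards [Ioo_mem_nhdsLT_of_mem (⟨hR, le_rfl⟩ : R ∈ Ioc (0:ℝ) R)] with x hx
      have hzx : ψk x - y x ≤ 0 := hmain x ⟨hx.1.le, hx.2.le⟩
      have hxR : x - R < 0 := by linarith [hx.2]
      rw [slope_def_field, hzR]
      exact div_nonneg_iff.mpr (Or.inr ⟨by linarith, by linarith⟩)
    have : α * δ / R = δ * k / (Real.sqrt 2 * R) := by
      rw [hαdef]; field_simp
    linarith
end
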